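/- For y in the interior of P(X), ⟨V(y), ∇g(y)⟩ = 0 if and only if V(y) = 0, i.e., y is an equilibrium point of the dynamical system. -/

import Mathlib

open Finset

/-- The state space `X = {n ∈ ℕ^K : ∑_j A_j n_j ≤ C}` as a `Finset` of `Fin K → ℕ`. -/
def XF (K C : ℕ) (A : Fin K → ℕ) : Finset (Fin K → ℕ) :=
  (Fintype.piFinset fun _ => Finset.range (C + 1)).filter fun n => ∑ k, A k * n k ≤ C

/-- Extension of `y : X → ℝ` by `0` outside `X`. -/
noncomputable def ye (K C : ℕ) (A : Fin K → ℕ) (y : XF K C A → ℝ) (m : Fin K → ℕ) : ℝ :=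
  if h : m ∈ XF K C A then y ⟨m, h⟩ else 0

/-- `⟨I_k, y⟩ = ∑_{m ∈ X} m_k y_m`. -/
noncomputable def avgS (K C : ℕ) (A : Fin K → ℕ) (y : XF K C A → ℝ) (k : Fin K) : ℝ :=
  ∑ n : XF K C A, (n.1 k : ℝ) * y n

/-- The limiting vector field `V` on `P(X)`. -/
noncomputable def Vs (K C : ℕ) (A : Fin K → ℕ) (lam gam mu : Fin K → ℝ)
    (y : XF K C A → ℝ) (n : XF K C A) : ℝ :=
  (∑ k, (lam k + gam k * avgS K C A y k) *
      ((if 1 ≤ n.1 k then ye K C A y (n.1 - Pi.single k 1) else 0)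
        - (if n.1 + Pi.single k 1 ∈ XF K C A then y n else 0)))
  + ∑ k, (gam k + mu k) *
      (((n.1 k : ℝ) + 1) *
          (if n.1 + Pi.single k 1 ∈ XF K C A then ye K C A y (n.1 + Pi.single k 1) else 0)
        - (n.1 k : ℝ) * y n)

/-- The energy function
`g(y) = ∑_{n∈X} y_n log(n! y_n) − ∑_k ∫_0^{⟨I_k,y⟩} log((λ_k+γ_k x)/(μ_k+γ_k)) dx`. -/
noncomputable def gE (K C : ℕ) (A : Fin K → ℕ) (lam gam mu : Fin K → ℝ)
    (y : XF K C A → ℝ) : ℝ :=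
  (∑ n : XF K C A, y n * Real.log ((∏ k, (Nat.factorial (n.1 k) : ℝ)) * y n))
  - ∑ k, ∫ x in (0:ℝ)..(avgS K C A y k), Real.log ((lam k + gam k * x) / (mu k + gam k))

section aux
variable {K C : ℕ} {A : Fin K → ℕ}

lemma entropy_hasDerivAt {c t0 : ℝ} (hc : 0 < c) (ht : 0 < t0) :
    HasDerivAt (fun t : ℝ => t * Real.log (c * t)) (Real.log (c * t0) + 1) t0 := by
  have hne : c * t0 ≠ 0 := by positivity
  have h1 : HasDerivAt (fun t : ℝ => c * t) c t0 := by
    simpa using (hasDerivAt_id t0).const_mul c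
  have h2 : HasDerivAt (fun t : ℝ => Real.log (c * t)) ((c * t0)⁻¹ * c) t0 :=
    (Real.hasDerivAt_log hne).comp t0 h1
  have h3 := (hasDerivAt_id t0).mul h2
  have h4 : HasDerivAt (fun t : ℝ => t * Real.log (c * t))
      (Real.log (c * t0) + t0 * (t0⁻¹ * c⁻¹ * c)) t0 := by simpa [Pi.mul_def] using h3
  convert h4 using 1
  field_simp

lemma ftc_hasDerivAt {lam gam mu s : ℝ} (hlam : 0 < lam) (hgam : 0 < gam)
    (hmu : 0 ≤ mu) (hs : 0 ≤ s) :
    HasDerivAt (fun u : ℝ => ∫ x in (0:ℝ)..u, Real.log ((lam + gam * x) / (mu + gam)))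
      (Real.log ((lam + gam * s) / (mu + gam))) s := by
  set f : ℝ → ℝ := fun x => Real.log ((lam + gam * x) / (mu + gam)) with hf
  have hmg : 0 < mu + gam := by linarith
  have hmeas : MeasureTheory.StronglyMeasurable f := by
    apply Measurable.stronglyMeasurable
    exact Real.measurable_log.comp ((measurable_const.add (measurable_id.const_mul gam)).div_const _)
  have hcont : ∀ x : ℝ, 0 ≤ x → ContinuousAt f x := by
    intro x hx
    have hpos : 0 < lam + gam * x := by positivity
    have : (lam + gam * x) / (mu + gam) ≠ 0 := by positivity
    have : ContinuousAt (fun x : ℝ => (lam + gam * x) / (mu + gam)) x :=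
      ((continuousAt_const.add (continuousAt_id.const_mul gam))).div_const _
    exact (Real.continuousAt_log ‹_›).comp this
  have hint : IntervalIntegrable f MeasureTheory.volume 0 s := by
    apply ContinuousOn.intervalIntegrable
    intro x hx
    have hx0 : 0 ≤ x := by
      rcases Set.mem_uIcc.mp hx with h | h
      · exact h.1
      · linarith [h.1, h.2]
    exact (hcont x hx0).continuousWithinAt
  exact intervalIntegral.integral_hasDerivAt_right hint
    (hmeas.stronglyMeasurableAtFilter) (hcont s hs)

end aux

section deriv
variable (K C : ℕ) (A : Fin K → ℕ) (lam gam mu : Fin K → ℝ)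

noncomputable def Lk (k : Fin K) : ((XF K C A → ℝ) →L[ℝ] ℝ) :=
  ∑ m : XF K C A, (m.1 k : ℝ) • ContinuousLinearMap.proj m

lemma Lk_apply (k : Fin K) (y : XF K C A → ℝ) : Lk K C A k y = avgS K C A y k := by
  simp [Lk, avgS, ContinuousLinearMap.sum_apply]

lemma avgS_nonneg (y : XF K C A → ℝ) (hy : ∀ n, 0 < y n) (k : Fin K) :
    0 ≤ avgS K C A y k :=
  Finset.sum_nonneg fun m _ => mul_nonneg (Nat.cast_nonneg _) (hy m).le

lemma hasFDerivAt_gE (hlam : ∀ k, 0 < lam k) (hgam : ∀ k, 0 < gam k) (hmu : ∀ k, 0 ≤ mu k)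
    (y : XF K C A → ℝ) (hy : ∀ n, 0 < y n) :
    HasFDerivAt (𝕜 := ℝ) (gE K C A lam gam mu)
      ((∑ m : XF K C A,
          (Real.log ((∏ k, (Nat.factorial (m.1 k) : ℝ)) * y m) + 1) • ContinuousLinearMap.proj m)
        - ∑ k, Real.log ((lam k + gam k * avgS K C A y k) / (mu k + gam k)) • Lk K C A k) y := by
  have hpart1 : HasFDerivAt (𝕜 := ℝ)
      (fun z : XF K C A → ℝ => ∑ m : XF K C A, z m * Real.log ((∏ k, (Nat.factorial (m.1 k) : ℝ)) * z m))
      (∑ m : XF K C A,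
        (Real.log ((∏ k, (Nat.factorial (m.1 k) : ℝ)) * y m) + 1) • ContinuousLinearMap.proj m) y := by
    apply HasFDerivAt.fun_sum
    intro m _
    have hc : (0:ℝ) < ∏ k, (Nat.factorial (m.1 k) : ℝ) :=
      Finset.prod_pos fun k _ => by exact_mod_cast Nat.factorial_pos _
    have := (entropy_hasDerivAt hc (hy m)).comp_hasFDerivAt y
      ((ContinuousLinearMap.proj m : (XF K C A → ℝ) →L[ℝ] ℝ).hasFDerivAt)
    simpa [Function.comp_def] using this
  have hpart2 : HasFDerivAt (𝕜 := ℝ)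
      (fun z : XF K C A → ℝ => ∑ k, ∫ x in (0:ℝ)..(avgS K C A z k),
          Real.log ((lam k + gam k * x) / (mu k + gam k)))
      (∑ k, Real.log ((lam k + gam k * avgS K C A y k) / (mu k + gam k)) • Lk K C A k) y := by
    apply HasFDerivAt.fun_sum
    intro k _
    have hd := ftc_hasDerivAt (hlam k) (hgam k) (hmu k) (avgS_nonneg K C A y hy k)
    have hl : HasFDerivAt (fun z : XF K C A → ℝ => Lk K C A k z) (Lk K C A k) y :=
      (Lk K C A k).hasFDerivAt
    rw [← Lk_apply K C A k y] at hd
    have hcomp := hd.comp_hasFDerivAt y hl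
    simpa [Function.comp_def, Lk_apply] using hcomp
  exact hpart1.sub hpart2
end deriv

section evalsec
variable (K C : ℕ) (A : Fin K → ℕ) (lam gam mu : Fin K → ℝ)

lemma fderiv_gE_apply (hlam : ∀ k, 0 < lam k) (hgam : ∀ k, 0 < gam k) (hmu : ∀ k, 0 ≤ mu k)
    (y : XF K C A → ℝ) (hy : ∀ n, 0 < y n) (n : XF K C A) :
    fderiv ℝ (gE K C A lam gam mu) y (Pi.single n 1) =
      Real.log ((∏ k, (Nat.factorial (n.1 k) : ℝ)) * y n) + 1
        - ∑ k, (n.1 k : ℝ) *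
            Real.log ((lam k + gam k * avgS K C A y k) / (mu k + gam k)) := by
  rw [(hasFDerivAt_gE K C A lam gam mu hlam hgam hmu y hy).fderiv]
  simp only [ContinuousLinearMap.sub_apply, ContinuousLinearMap.sum_apply,
    ContinuousLinearMap.smul_apply, ContinuousLinearMap.proj_apply, Lk,
    Pi.single_apply, smul_eq_mul, mul_ite, mul_one, mul_zero, Finset.sum_ite_eq',
    Finset.mem_univ, if_true]
  congr 1
  exact Finset.sum_congr rfl fun k _ => mul_comm _ _

section comb
variable {K C : ℕ} {A : Fin K → ℕ}

lemma XF_mem_mono {m n : Fin K → ℕ} (hle : ∀ j, m j ≤ n j) (hn : n ∈ XF K C A) :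
    m ∈ XF K C A := by
  simp only [XF, Finset.mem_filter, Fintype.mem_piFinset, Finset.mem_range] at hn ⊢
  refine ⟨fun j => lt_of_le_of_lt (hle j) (hn.1 j), le_trans ?_ hn.2⟩
  exact Finset.sum_le_sum fun j _ => Nat.mul_le_mul_left _ (hle j)

lemma XF_sub_mem {n : Fin K → ℕ} (hn : n ∈ XF K C A) (k : Fin K) :
    n - Pi.single k 1 ∈ XF K C A :=
  XF_mem_mono (fun j => tsub_le_self) hn

lemma nat_sub_add {n : Fin K → ℕ} {k : Fin K} (h : 1 ≤ n k) :
    (n - Pi.single k 1) + Pi.single k 1 = n := by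
  funext j
  by_cases hj : j = k
  · subst hj
    simp only [Pi.add_apply, Pi.sub_apply, Pi.single_eq_same]
    omega
  · simp [Pi.single_apply, hj]

lemma nat_add_sub (n : Fin K → ℕ) (k : Fin K) :
    (n + Pi.single k 1) - Pi.single k 1 = n := by
  funext j
  by_cases hj : j = k
  · subst hj; simp
  · simp [Pi.single_apply, hj]

lemma add_single_apply (n : Fin K → ℕ) (k : Fin K) :
    (n + Pi.single k 1 : Fin K → ℕ) k = n k + 1 := by simp

lemma prod_factorial_add (n : Fin K → ℕ) (k : Fin K) :
    (∏ j, (Nat.factorial ((n + Pi.single k 1 : Fin K → ℕ) j) : ℝ)) =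
      ((n k : ℝ) + 1) * ∏ j, (Nat.factorial (n j) : ℝ) := by
  have hupd : n + Pi.single k 1 = Function.update n k (n k + 1) := by
    funext j
    by_cases hj : j = k
    · subst hj; simp
    · simp [Pi.single_apply, hj, Function.update_of_ne hj]
  rw [hupd]
  have h1 : (fun j => (Nat.factorial (Function.update n k (n k + 1) j) : ℝ))
      = Function.update (fun j => (Nat.factorial (n j) : ℝ)) k ((Nat.factorial (n k + 1) : ℝ)) := by
    funext j
    exact Function.apply_update (fun i m => ((Nat.factorial m : ℕ) : ℝ)) n k (n k + 1) j
  rw [h1, Finset.prod_update_of_mem (Finset.mem_univ k)]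
  rw [← Finset.mul_prod_erase Finset.univ _ (Finset.mem_univ k)]
  rw [Nat.factorial_succ, Finset.sdiff_singleton_eq_erase]
  push_cast
  ring

lemma sign_lemma {a b : ℝ} (ha : 0 < a) (hb : 0 < b) :
    (a - b) * (Real.log b - Real.log a) ≤ 0 ∧
      ((a - b) * (Real.log b - Real.log a) = 0 ↔ a = b) := by
  rcases lt_trichotomy a b with h | h | h
  · have hl : Real.log a < Real.log b := Real.log_lt_log ha h
    constructor
    · exact mul_nonpos_of_nonpos_of_nonneg (by linarith) (by linarith)
    · constructor
      · intro hz
        exfalso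
        have : (a - b) * (Real.log b - Real.log a) < 0 :=
          mul_neg_of_neg_of_pos (by linarith) (by linarith)
        linarith
      · intro hz; linarith
  · subst h; simp
  · have hl : Real.log b < Real.log a := Real.log_lt_log hb h
    constructor
    · exact mul_nonpos_of_nonneg_of_nonpos (by linarith) (by linarith)
    · constructor
      · intro hz
        exfalso
        have : (a - b) * (Real.log b - Real.log a) < 0 :=
          mul_neg_of_pos_of_neg (by linarith) (by linarith)
        linarith
      · intro hz; linarith

end comb

noncomputable def wF (K C : ℕ) (A : Fin K → ℕ) (lam gam mu : Fin K → ℝ)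
    (y : XF K C A → ℝ) (n : XF K C A) (k : Fin K) : ℝ :=
  if h : n.1 + Pi.single k 1 ∈ XF K C A then
    (lam k + gam k * avgS K C A y k) * y n
      - (mu k + gam k) * ((n.1 k : ℝ) + 1) * y ⟨n.1 + Pi.single k 1, h⟩
  else 0

noncomputable def GF (K C : ℕ) (A : Fin K → ℕ) (lam gam mu : Fin K → ℝ)
    (y : XF K C A → ℝ) (n : XF K C A) : ℝ :=
  Real.log ((∏ k, (Nat.factorial (n.1 k) : ℝ)) * y n) + 1
    - ∑ k, (n.1 k : ℝ) * Real.log ((lam k + gam k * avgS K C A y k) / (mu k + gam k))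

section main
variable (K C : ℕ) (A : Fin K → ℕ) (lam gam mu : Fin K → ℝ) (y : XF K C A → ℝ)

lemma V_eq_w (n : XF K C A) :
    Vs K C A lam gam mu y n = ∑ k,
      ((if h : 1 ≤ n.1 k then
          wF K C A lam gam mu y ⟨n.1 - Pi.single k 1, XF_sub_mem n.2 k⟩ k else 0)
        - wF K C A lam gam mu y n k) := by
  rw [Vs, ← Finset.sum_add_distrib]
  refine Finset.sum_congr rfl fun k _ => ?_
  by_cases h1 : 1 ≤ n.1 k
  · have hmem : (n.1 - Pi.single k 1) + Pi.single k 1 ∈ XF K C A := by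
      rw [nat_sub_add h1]; exact n.2
    have hyeq : y ⟨(n.1 - Pi.single k 1) + Pi.single k 1, hmem⟩ = y n := by
      congr 1; exact Subtype.ext (nat_sub_add h1)
    have hk1 : (((n.1 - Pi.single k 1 : Fin K → ℕ) k : ℕ) : ℝ) + 1 = (n.1 k : ℝ) := by
      have : (n.1 - Pi.single k 1 : Fin K → ℕ) k = n.1 k - 1 := by simp
      rw [this, Nat.cast_sub h1]; ring
    have hye : ye K C A y (n.1 - Pi.single k 1) = y ⟨n.1 - Pi.single k 1, XF_sub_mem n.2 k⟩ :=
      dif_pos _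
    rw [dif_pos h1, if_pos h1, wF, dif_pos hmem, hyeq, hye, hk1]
    by_cases h2 : n.1 + Pi.single k 1 ∈ XF K C A
    · have hye2 : ye K C A y (n.1 + Pi.single k 1) = y ⟨n.1 + Pi.single k 1, h2⟩ := dif_pos _
      rw [if_pos h2, if_pos h2, wF, dif_pos h2, hye2]
      ring
    · rw [if_neg h2, if_neg h2, wF, dif_neg h2]
      ring
  · have hnk : (n.1 k : ℝ) = 0 := by
      have : n.1 k = 0 := by omega
      simp [this]
    rw [dif_neg h1, if_neg h1]
    by_cases h2 : n.1 + Pi.single k 1 ∈ XF K C A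
    · have hye2 : ye K C A y (n.1 + Pi.single k 1) = y ⟨n.1 + Pi.single k 1, h2⟩ := dif_pos _
      rw [if_pos h2, if_pos h2, wF, dif_pos h2, hye2, hnk]
      ring
    · rw [if_neg h2, if_neg h2, wF, dif_neg h2, hnk]
      ring

lemma GF_diff (hlam : ∀ k, 0 < lam k) (hgam : ∀ k, 0 < gam k) (hmu : ∀ k, 0 ≤ mu k)
    (hy : ∀ n, 0 < y n) (n : XF K C A) (k : Fin K)
    (h : n.1 + Pi.single k 1 ∈ XF K C A) :
    GF K C A lam gam mu y ⟨n.1 + Pi.single k 1, h⟩ - GF K C A lam gam mu y n =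
      Real.log ((mu k + gam k) * (((n.1 k : ℝ) + 1) * y ⟨n.1 + Pi.single k 1, h⟩))
        - Real.log ((lam k + gam k * avgS K C A y k) * y n) := by
  set s := avgS K C A y k with hsdef
  have hs : 0 ≤ s := avgS_nonneg K C A y hy k
  have hc : (0:ℝ) < ∏ j, (Nat.factorial (n.1 j) : ℝ) :=
    Finset.prod_pos fun j _ => by exact_mod_cast Nat.factorial_pos _
  have hyn : 0 < y n := hy n
  have hyn' : 0 < y ⟨n.1 + Pi.single k 1, h⟩ := hy _
  have hnk1 : (0:ℝ) < (n.1 k : ℝ) + 1 := by positivity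
  have hls : 0 < lam k + gam k * s := by
    have := hlam k; have := hgam k; nlinarith
  have hmg : 0 < mu k + gam k := by have := hmu k; have := hgam k; linarith
  have hsum : ∑ j, (((n.1 + Pi.single k 1 : Fin K → ℕ) j : ℕ) : ℝ) *
        Real.log ((lam j + gam j * avgS K C A y j) / (mu j + gam j)) =
      (∑ j, (n.1 j : ℝ) * Real.log ((lam j + gam j * avgS K C A y j) / (mu j + gam j)))
        + Real.log ((lam k + gam k * s) / (mu k + gam k)) := by
    have hterm : ∀ j : Fin K, (((n.1 + Pi.single k 1 : Fin K → ℕ) j : ℕ) : ℝ) *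
        Real.log ((lam j + gam j * avgS K C A y j) / (mu j + gam j)) =
        (n.1 j : ℝ) * Real.log ((lam j + gam j * avgS K C A y j) / (mu j + gam j))
          + (if j = k then Real.log ((lam k + gam k * s) / (mu k + gam k)) else 0) := by
      intro j
      by_cases hj : j = k
      · subst hj
        rw [if_pos rfl, add_single_apply]
        push_cast
        rw [← hsdef]
        ring
      · have : (n.1 + Pi.single k 1 : Fin K → ℕ) j = n.1 j := by simp [Pi.single_apply, hj]
        rw [this, if_neg hj, add_zero]
    rw [Finset.sum_congr rfl fun j _ => hterm j, Finset.sum_add_distrib,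
      Finset.sum_ite_eq' Finset.univ k, if_pos (Finset.mem_univ k)]
  have hprod := prod_factorial_add n.1 k
  have hGup : GF K C A lam gam mu y ⟨n.1 + Pi.single k 1, h⟩ =
      Real.log (((n.1 k : ℝ) + 1) * ((∏ j, (Nat.factorial (n.1 j) : ℝ)) *
          y ⟨n.1 + Pi.single k 1, h⟩)) + 1
        - ((∑ j, (n.1 j : ℝ) *
            Real.log ((lam j + gam j * avgS K C A y j) / (mu j + gam j)))
          + Real.log ((lam k + gam k * s) / (mu k + gam k))) := by
    rw [GF, ← hsum, hprod, mul_assoc]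
  rw [hGup, GF]
  rw [Real.log_mul hnk1.ne' (by positivity), Real.log_mul hc.ne' hyn'.ne',
    Real.log_mul hc.ne' hyn.ne', Real.log_div hls.ne' hmg.ne',
    Real.log_mul hmg.ne' (by positivity), Real.log_mul hnk1.ne' hyn'.ne',
    Real.log_mul hls.ne' hyn.ne']
  ring

end main

section reindex
variable (K C : ℕ) (A : Fin K → ℕ) (lam gam mu : Fin K → ℝ) (y : XF K C A → ℝ)

lemma sum_u_eq (k : Fin K) (G : XF K C A → ℝ) :
    (∑ n : XF K C A, (if _ : 1 ≤ n.1 k then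
        wF K C A lam gam mu y ⟨n.1 - Pi.single k 1, XF_sub_mem n.2 k⟩ k else 0) * G n)
      = ∑ n : XF K C A, (if h : n.1 + Pi.single k 1 ∈ XF K C A then
          wF K C A lam gam mu y n k * G ⟨n.1 + Pi.single k 1, h⟩ else 0) := by
  rw [← Finset.sum_filter_of_ne (s := Finset.univ)
      (p := fun n : XF K C A => 1 ≤ n.1 k) (fun n _ hne => by
        by_contra hc
        rw [dif_neg hc, zero_mul] at hne
        exact hne rfl)]
  rw [← Finset.sum_filter_of_ne (s := Finset.univ)
      (p := fun n : XF K C A => n.1 + Pi.single k 1 ∈ XF K C A) (fun n _ hne => by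
        by_contra hc
        rw [dif_neg hc] at hne
        exact hne rfl)]
  refine Finset.sum_bij' (fun n _ => (⟨n.1 - Pi.single k 1, XF_sub_mem n.2 k⟩ : XF K C A))
    (fun m hm => (⟨m.1 + Pi.single k 1,
        (Finset.mem_filter.mp hm).2⟩ : XF K C A)) ?_ ?_ ?_ ?_ ?_
  · intro n hn
    have h1 : 1 ≤ n.1 k := (Finset.mem_filter.mp hn).2
    simp only [Finset.mem_filter, Finset.mem_univ, true_and]
    rw [nat_sub_add h1]
    exact n.2
  · intro m hm
    simp only [Finset.mem_filter, Finset.mem_univ, true_and]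
    simp [add_single_apply]
  · intro n hn
    have h1 : 1 ≤ n.1 k := (Finset.mem_filter.mp hn).2
    exact Subtype.ext (nat_sub_add h1)
  · intro m hm
    exact Subtype.ext (nat_add_sub m.1 k)
  · intro n hn
    have h1 : 1 ≤ n.1 k := (Finset.mem_filter.mp hn).2
    have hmem : (n.1 - Pi.single k 1) + Pi.single k 1 ∈ XF K C A := by
      rw [nat_sub_add h1]; exact n.2
    rw [dif_pos h1, dif_pos hmem]
    congr 1
    congr 1
    exact Subtype.ext (nat_sub_add h1).symm
end reindex


/-- For `y` in the interior of `P(X)`, `⟨V(y), ∇g(y)⟩ = 0` iff `V(y) = 0`. -/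
theorem lyapunov_zero_iff_equilibrium (K C : ℕ) (hK : 0 < K) (hC : 0 < C)
    (A : Fin K → ℕ) (hA : ∀ k, 0 < A k)
    (lam gam mu : Fin K → ℝ)
    (hlam : ∀ k, 0 < lam k) (hgam : ∀ k, 0 < gam k) (hmu : ∀ k, 0 ≤ mu k)
    (y : XF K C A → ℝ) (hy : ∀ n, 0 < y n) (hysum : ∑ n : XF K C A, y n = 1) :
    (∑ n : XF K C A, Vs K C A lam gam mu y n *
        fderiv ℝ (gE K C A lam gam mu) y (Pi.single n 1)) = 0 ↔
      ∀ n : XF K C A, Vs K C A lam gam mu y n = 0 := by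
  have hGd : ∀ n : XF K C A, fderiv ℝ (gE K C A lam gam mu) y (Pi.single n 1)
      = GF K C A lam gam mu y n := fun n => by
    rw [fderiv_gE_apply K C A lam gam mu hlam hgam hmu y hy n, GF]
  constructor
  · intro hS
    rw [Finset.sum_congr rfl fun n _ => by rw [hGd n]] at hS
    -- abbreviations
    set G : XF K C A → ℝ := GF K C A lam gam mu y with hG
    set w : XF K C A → Fin K → ℝ := wF K C A lam gam mu y with hw
    have key : (∑ n : XF K C A, Vs K C A lam gam mu y n * G n)
        = ∑ k, ∑ n : XF K C A, (if h : n.1 + Pi.single k 1 ∈ XF K C A then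
            w n k * (G ⟨n.1 + Pi.single k 1, h⟩ - G n) else 0) := by
      have step1 : (∑ n : XF K C A, Vs K C A lam gam mu y n * G n)
          = ∑ k, ((∑ n : XF K C A, (if _ : 1 ≤ n.1 k then
                w ⟨n.1 - Pi.single k 1, XF_sub_mem n.2 k⟩ k else 0) * G n)
              - ∑ n : XF K C A, w n k * G n) := by
        rw [show (∑ n : XF K C A, Vs K C A lam gam mu y n * G n)
            = ∑ n : XF K C A, ∑ k, (((if _ : 1 ≤ n.1 k then
                  w ⟨n.1 - Pi.single k 1, XF_sub_mem n.2 k⟩ k else 0) * G n)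
                - w n k * G n) from
          Finset.sum_congr rfl fun n _ => by
            rw [V_eq_w, Finset.sum_mul]
            exact Finset.sum_congr rfl fun k _ => sub_mul _ _ _]
        rw [Finset.sum_comm]
        exact Finset.sum_congr rfl fun k _ => Finset.sum_sub_distrib _ _
      rw [step1]
      refine Finset.sum_congr rfl fun k _ => ?_
      rw [sum_u_eq K C A lam gam mu y k G]
      rw [show (∑ n : XF K C A, w n k * G n)
          = ∑ n : XF K C A, (if h : n.1 + Pi.single k 1 ∈ XF K C A then
              w n k * G n else 0) from
        Finset.sum_congr rfl fun n _ => by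
          by_cases h : n.1 + Pi.single k 1 ∈ XF K C A
          · rw [dif_pos h]
          · rw [dif_neg h, hw, wF, dif_neg h, zero_mul]]
      rw [← Finset.sum_sub_distrib]
      refine Finset.sum_congr rfl fun n _ => ?_
      by_cases h : n.1 + Pi.single k 1 ∈ XF K C A
      · rw [dif_pos h, dif_pos h, dif_pos h, mul_sub]
      · rw [dif_neg h, dif_neg h, dif_neg h, sub_zero]
    rw [key] at hS
    -- each term is nonpositive
    have hterm : ∀ (k : Fin K) (n : XF K C A),
        (if h : n.1 + Pi.single k 1 ∈ XF K C A then
            w n k * (G ⟨n.1 + Pi.single k 1, h⟩ - G n) else 0) ≤ 0 ∧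
          ((if h : n.1 + Pi.single k 1 ∈ XF K C A then
            w n k * (G ⟨n.1 + Pi.single k 1, h⟩ - G n) else 0) = 0 → w n k = 0) := by
      intro k n
      by_cases h : n.1 + Pi.single k 1 ∈ XF K C A
      · have hs : 0 ≤ avgS K C A y k := avgS_nonneg K C A y hy k
        set a : ℝ := (lam k + gam k * avgS K C A y k) * y n with ha
        set b : ℝ := (mu k + gam k) * (((n.1 k : ℝ) + 1) * y ⟨n.1 + Pi.single k 1, h⟩) with hb
        have hls : 0 < lam k + gam k * avgS K C A y k := by
          have := mul_nonneg (hgam k).le hs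
          have := hlam k
          linarith
        have hap : 0 < a := mul_pos hls (hy n)
        have hmg : 0 < mu k + gam k := by have := hmu k; have := hgam k; linarith
        have hnk1 : (0:ℝ) < (n.1 k : ℝ) + 1 := by positivity
        have hbp : 0 < b := mul_pos hmg (mul_pos hnk1 (hy _))
        have hwab : w n k = a - b := by
          rw [hw, wF, dif_pos h, ha, hb]; ring
        have hgd := GF_diff K C A lam gam mu y hlam hgam hmu hy n k h
        rw [dif_pos h, hwab, ← hG] at *
        rw [hgd]
        rw [← ha, ← hb]
        exact ⟨(sign_lemma hap hbp).1, fun hz => by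
          have := (sign_lemma hap hbp).2.mp hz
          rw [this, sub_self]⟩
      · rw [dif_neg h]
        exact ⟨le_refl 0, fun _ => by rw [hw, wF, dif_neg h]⟩
    have hinner : ∀ k ∈ Finset.univ, (∑ n : XF K C A,
        (if h : n.1 + Pi.single k 1 ∈ XF K C A then
          w n k * (G ⟨n.1 + Pi.single k 1, h⟩ - G n) else 0)) ≤ 0 :=
      fun k _ => Finset.sum_nonpos fun n _ => (hterm k n).1
    have hz1 := (Finset.sum_eq_zero_iff_of_nonpos hinner).mp hS
    have hw0 : ∀ (n : XF K C A) (k : Fin K), w n k = 0 := by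
      intro n k
      have hz2 := (Finset.sum_eq_zero_iff_of_nonpos
        (fun n _ => (hterm k n).1)).mp (hz1 k (Finset.mem_univ k)) n (Finset.mem_univ n)
      exact (hterm k n).2 hz2
    intro n
    rw [V_eq_w]
    refine Finset.sum_eq_zero fun k _ => ?_
    rw [← hw, hw0 n k]
    by_cases h1 : 1 ≤ n.1 k
    · rw [dif_pos h1, hw0, sub_zero]
    · rw [dif_neg h1, sub_zero]
  · intro h0
    refine Finset.sum_eq_zero fun n _ => ?_
    rw [h0 n, zero_mul]
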